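/- Let F_n be a free group of finite rank n and let φ ∈ Aut(F_n) be such that φ^q is an inner automorphism of F_n for some integer q ≥ 1 (i.e. the class of φ has finite order in Out(F_n)). Then the semidirect product F_n ⋊_φ ℤ contains a subgroup of finite index which is isomorphic to F_n × ℤ. -/
import Mathlib


/-- The mapping torus `N ⋊_α ℤ` of a group `N` by an automorphism `α`:
the semidirect product formed via the homomorphism `ℤ → Aut(N)` sending `1` to `α`. -/
abbrev MappingTorus {N : Type*} [Group N] (α : MulAut N) : Type _ :=
  SemidirectProduct N (Multiplicative ℤ) (zpowersHom (MulAut N) α)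

/-- If `φ ∈ Aut(F_n)` has a power `φ^q` (`q ≥ 1`) which is inner (i.e. `[φ]`
has finite order in `Out(F_n)`), then `F_n ⋊_φ ℤ` has a finite index subgroup isomorphic
to `F_n × ℤ`. -/
theorem stmt_7 (n : ℕ) (φ : MulAut (FreeGroup (Fin n))) (q : ℕ) (hq : 1 ≤ q)
    (hinner : ∃ g : FreeGroup (Fin n), φ ^ q = MulAut.conj g) :
    ∃ H : Subgroup (MappingTorus φ), H.FiniteIndex ∧
      Nonempty (H ≃* FreeGroup (Fin n) × Multiplicative ℤ) := by
  obtain ⟨g, hg⟩ := hinner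
  -- the central element z = (g⁻¹, q)
  set z : MappingTorus φ := ⟨g⁻¹, Multiplicative.ofAdd (q : ℤ)⟩ with hz
  have hphiq : ∀ x : FreeGroup (Fin n), (φ : MulAut (FreeGroup (Fin n))) ^ (q : ℤ) = φ ^ q := by
    intro x; rw [zpow_natCast]
  have key : ∀ x : FreeGroup (Fin n), Commute (SemidirectProduct.inl x) z := by
    intro x
    show SemidirectProduct.inl x * z = z * SemidirectProduct.inl x
    ext
    · show x * (zpowersHom (MulAut (FreeGroup (Fin n))) φ (1 : Multiplicative ℤ) : MulAut (FreeGroup (Fin n))) g⁻¹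
        = g⁻¹ * (zpowersHom (MulAut (FreeGroup (Fin n))) φ (Multiplicative.ofAdd (q:ℤ))) x
      have h1 : (zpowersHom (MulAut (FreeGroup (Fin n))) φ (1 : Multiplicative ℤ)) = 1 := by
        simp [zpowersHom]
      have h2 : (zpowersHom (MulAut (FreeGroup (Fin n))) φ (Multiplicative.ofAdd (q:ℤ))) = φ ^ q := by
        simp [zpowersHom, zpow_natCast]
      rw [h1, h2, hg]
      simp [mul_assoc]
    · show (1 : Multiplicative ℤ) * Multiplicative.ofAdd (q:ℤ)
        = Multiplicative.ofAdd (q:ℤ) * 1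
      simp
  have hcomm : ∀ (x : FreeGroup (Fin n)) (m : Multiplicative ℤ),
      Commute (SemidirectProduct.inl x) (zpowersHom (MappingTorus φ) z m) :=
    fun x m => (key x).zpow_right _
  set f : FreeGroup (Fin n) × Multiplicative ℤ →* MappingTorus φ :=
    MonoidHom.noncommCoprod SemidirectProduct.inl (zpowersHom (MappingTorus φ) z) hcomm
    with hf
  have hfapp : ∀ p : FreeGroup (Fin n) × Multiplicative ℤ,
      f p = SemidirectProduct.inl p.1 * z ^ (Multiplicative.toAdd p.2) := fun p => rfl
  have hright_z : ∀ k : ℤ, SemidirectProduct.rightHom (z ^ k)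
      = Multiplicative.ofAdd ((q : ℤ) * k) := by
    intro k
    rw [map_zpow]
    show (Multiplicative.ofAdd (q:ℤ)) ^ k = _
    rw [← ofAdd_zsmul]
    simp [mul_comm]
  have hqne : (q : ℤ) ≠ 0 := by exact_mod_cast Nat.one_le_iff_ne_zero.mp hq
  -- injectivity of f
  have hinj : Function.Injective f := by
    intro p p' hpp
    have hr := congrArg SemidirectProduct.rightHom hpp
    rw [hfapp, hfapp, map_mul, map_mul, SemidirectProduct.rightHom_inl,
      SemidirectProduct.rightHom_inl, one_mul, one_mul, hright_z, hright_z] at hr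
    have h2 : Multiplicative.toAdd p.2 = Multiplicative.toAdd p'.2 := by
      have := Multiplicative.ofAdd.injective hr
      exact mul_left_cancel₀ hqne this
    have h2' : p.2 = p'.2 := Multiplicative.toAdd.injective h2
    have h1 : p.1 = p'.1 := by
      rw [hfapp, hfapp, h2'] at hpp
      exact SemidirectProduct.inl_injective (mul_right_cancel hpp)
    exact Prod.ext h1 h2'
  refine ⟨f.range, ?_, ⟨(MonoidHom.ofInjective hinj).symm⟩⟩
  -- finite index: f.range contains the kernel of G → Multiplicative (ZMod q)
  haveI : NeZero q := ⟨by omega⟩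
  set ψ : Multiplicative ℤ →* Multiplicative (ZMod q) :=
    AddMonoidHom.toMultiplicative (Int.castAddHom (ZMod q)) with hψ
  set χ : MappingTorus φ →* Multiplicative (ZMod q) :=
    ψ.comp SemidirectProduct.rightHom with hχ
  haveI : Finite χ.range := Subtype.finite
  have hle : χ.ker ≤ f.range := by
    intro p hp
    have hdvd : (q : ℤ) ∣ Multiplicative.toAdd p.right := by
      have : ((Multiplicative.toAdd p.right : ℤ) : ZMod q) = 0 := by
        have := hp
        simp only [MonoidHom.mem_ker, hχ, MonoidHom.comp_apply] at this
        exact this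
      exact_mod_cast (ZMod.intCast_zmod_eq_zero_iff_dvd _ q).mp this
    obtain ⟨k, hk⟩ := hdvd
    -- p * (z^k)⁻¹ is in the kernel of rightHom, hence in range of inl
    have hmem : p * (z ^ k)⁻¹ ∈ SemidirectProduct.rightHom.ker := by
      rw [MonoidHom.mem_ker, map_mul, map_inv, hright_z, ← hk]
      show p.right * _ = 1
      rw [← ofAdd_toAdd p.right]
      simp [← ofAdd_neg, ← ofAdd_add]
    rw [← SemidirectProduct.range_inl_eq_ker_rightHom] at hmem
    obtain ⟨y, hy⟩ := hmem
    refine ⟨(y, Multiplicative.ofAdd k), ?_⟩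
    rw [hfapp]
    show SemidirectProduct.inl y * z ^ (Multiplicative.toAdd (Multiplicative.ofAdd k)) = p
    rw [toAdd_ofAdd, hy]
    group
  exact Subgroup.finiteIndex_of_le hle
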